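/- (Noisy random Logan, deterministic core) Let f: Z_N → C, M, S ⊆ Z_N, ε, δ ≥ 0. Suppose ||f̂||_{L^1(S^c)} ≤ (ε/N)||f̂||_{L^1(Z_N)}, g satisfies ||f − g||_{L^1(M^c)} ≤ δN^{-1}||f||_{L^1(M^c)} and ||ĝ||_1 ≤ ||f̂||_1, and h = f − g satisfies the Talagrand-type bound ||(1_M h)^||_{L^1(S)} ≤ |S|^{1/2} N^{-1/2} C_T (log N log log N)^{1/2} ||(1_M h)^||_1 with |S| < N/(16 C_T² log N log log N). Then (1/|M|) Σ_{x∈M} |h(x)| ≤ (4ε + 2δ)·(1/N) Σ_{x∈Z_N} |f(x)|. -/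

import Mathlib

open Finset

/-- The discrete Fourier transform on `ZMod N`:
`f̂(ω) = N^{-1/2} ∑_x f(x) e^{-2πiωx/N}`. -/
noncomputable def dft {N : ℕ} [NeZero N] (f : ZMod N → ℂ) (ω : ZMod N) : ℂ :=
  (Real.sqrt N : ℂ)⁻¹ *
    ∑ x : ZMod N, f x * Complex.exp (-(2 * Real.pi * Complex.I) * ((ω.val * x.val : ℕ) : ℂ) / (N : ℂ))

/-- `||u||_{L^1(A)} = ∑_{x ∈ A} |u(x)|`. -/
noncomputable def l1 {N : ℕ} [NeZero N] (A : Finset (ZMod N)) (u : ZMod N → ℂ) : ℝ :=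
  ∑ x ∈ A, ‖u x‖

namespace Stmt16Aux

/-- Basic exponential `E N a = exp(-2πi a / N)`. -/
noncomputable def E (N : ℕ) (a : ℕ) : ℂ :=
  Complex.exp (-(2 * Real.pi * Complex.I) * (a : ℂ) / (N : ℂ))

variable {N : ℕ} [NeZero N]

lemma Ncast_ne : ((N : ℂ)) ≠ 0 := by
  exact_mod_cast Nat.cast_ne_zero.mpr (NeZero.ne N)

lemma E_add_mul (a k : ℕ) : E N (a + N * k) = E N a := by
  have hN : (N : ℂ) ≠ 0 := Ncast_ne
  unfold E
  rw [show -(2 * (Real.pi : ℂ) * Complex.I) * ((a + N * k : ℕ) : ℂ) / (N : ℂ)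
      = -(2 * (Real.pi : ℂ) * Complex.I) * (a : ℂ) / (N : ℂ)
        + ((-(k : ℤ) : ℤ) : ℂ) * (2 * (Real.pi : ℂ) * Complex.I) by
    push_cast; field_simp; ring]
  rw [Complex.exp_add, Complex.exp_int_mul_two_pi_mul_I, mul_one]

lemma E_mod (a : ℕ) : E N (a % N) = E N a := by
  conv_rhs => rw [← Nat.mod_add_div a N, E_add_mul]

/-- The additive character `e t = exp(-2πi t.val / N)`. -/
noncomputable def e (t : ZMod N) : ℂ := E N t.val

lemma E_mul_eq (ω x : ZMod N) : E N (ω.val * x.val) = e (ω * x) := by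
  rw [e, ZMod.val_mul, E_mod]

lemma dft_eq (u : ZMod N → ℂ) (ω : ZMod N) :
    dft u ω = (Real.sqrt N : ℂ)⁻¹ * ∑ x : ZMod N, u x * e (ω * x) := by
  unfold dft
  congr 1
  refine Finset.sum_congr rfl fun x _ => ?_
  rw [← E_mul_eq]
  rfl

lemma abs_e (t : ZMod N) : ‖e t‖ = 1 := by
  rw [e, E, show -(2 * (Real.pi : ℂ) * Complex.I) * ((t.val : ℕ) : ℂ) / (N : ℂ)
      = ((-(2 * Real.pi * t.val / N) : ℝ) : ℂ) * Complex.I by push_cast; ring]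
  exact Complex.norm_exp_ofReal_mul_I _

lemma e_add (a b : ZMod N) : e (a + b) = e a * e b := by
  rw [e, ZMod.val_add, E_mod]
  show E N (a.val + b.val) = E N a.val * E N b.val
  unfold E
  rw [← Complex.exp_add]
  congr 1
  push_cast
  ring

lemma e_zero : e (0 : ZMod N) = 1 := by
  rw [e, ZMod.val_zero]
  simp [E]

lemma sum_val (g : ℕ → ℂ) : ∑ x : ZMod N, g x.val = ∑ i ∈ Finset.range N, g i := by
  refine Finset.sum_nbij' (fun x : ZMod N => x.val) (fun i : ℕ => (i : ZMod N))
    (fun a _ => ?_) (fun a ha => Finset.mem_univ _) (fun a _ => ZMod.natCast_zmod_val a)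
    (fun a ha => ZMod.val_natCast_of_lt (Finset.mem_range.mp ha)) (fun a _ => rfl)
  exact Finset.mem_range.mpr (ZMod.val_lt a)

lemma e_pow (t : ZMod N) (x : ZMod N) : e (t * x) = e t ^ x.val := by
  rw [← E_mul_eq, e, E, E, ← Complex.exp_nat_mul]
  congr 1
  push_cast
  ring

lemma orth (t : ZMod N) : ∑ x : ZMod N, e (t * x) = if t = 0 then (N : ℂ) else 0 := by
  by_cases ht : t = 0
  · subst ht
    simp only [zero_mul, e_zero, Finset.sum_const, Finset.card_univ, ZMod.card, if_true]
    simp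
  · rw [if_neg ht]
    have hval : 0 < t.val := by
      rcases Nat.eq_zero_or_pos t.val with h | h
      · exact absurd ((ZMod.val_eq_zero t).mp h) ht
      · exact h
    have hvlt : t.val < N := ZMod.val_lt t
    set ζ : ℂ := e t with hζ
    have hζ1 : ζ ≠ 1 := by
      intro hc
      rw [hζ, e, E] at hc
      obtain ⟨n, hn⟩ := Complex.exp_eq_one_iff.mp hc
      have h2pi : (2 * (Real.pi : ℂ) * Complex.I) ≠ 0 := by
        simp [Complex.I_ne_zero, Real.pi_ne_zero, Complex.ofReal_ne_zero]
      have key : (-(t.val : ℂ) / (N : ℂ)) * (2 * (Real.pi : ℂ) * Complex.I)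
          = (n : ℂ) * (2 * (Real.pi : ℂ) * Complex.I) := by
        rw [← hn]; ring
      have h3 : (-(t.val : ℂ) / (N : ℂ)) = (n : ℂ) := mul_right_cancel₀ h2pi key
      have h4 : (-(t.val : ℂ)) = (n : ℂ) * (N : ℂ) := by
        rw [div_eq_iff Ncast_ne] at h3; exact h3
      have h5 : (-(t.val : ℝ)) = (n : ℝ) * (N : ℝ) := by
        exact_mod_cast congrArg Complex.re h4
      have hNpos : (0 : ℝ) < N := by
        exact_mod_cast Nat.pos_of_ne_zero (NeZero.ne N)
      have htv : (0 : ℝ) < (t.val : ℝ) := by exact_mod_cast hval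
      have htv2 : (t.val : ℝ) < N := by exact_mod_cast hvlt
      -- so n * N = -t.val ∈ (-N, 0), impossible for integer n
      have hn0 : (n : ℝ) < 0 := by nlinarith
      have hn0' : n < 0 := by exact_mod_cast hn0
      have hn1 : (n : ℝ) ≤ -1 := by exact_mod_cast (by omega : n ≤ -1)
      nlinarith
    have hζN : ζ ^ N = 1 := by
      rw [hζ, e, E, ← Complex.exp_nat_mul]
      rw [show (N : ℂ) * (-(2 * (Real.pi : ℂ) * Complex.I) * ((t.val : ℕ) : ℂ) / (N : ℂ))
          = ((-(t.val : ℤ) : ℤ) : ℂ) * (2 * (Real.pi : ℂ) * Complex.I) by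
        have hN : (N : ℂ) ≠ 0 := Ncast_ne
        push_cast; field_simp]
      exact Complex.exp_int_mul_two_pi_mul_I _
    calc ∑ x : ZMod N, e (t * x) = ∑ x : ZMod N, ζ ^ x.val := by
          exact Finset.sum_congr rfl fun x _ => e_pow t x
      _ = ∑ i ∈ Finset.range N, ζ ^ i := sum_val _
      _ = (ζ ^ N - 1) / (ζ - 1) := geom_sum_eq hζ1 N
      _ = 0 := by rw [hζN]; simp

lemma sqrtN_pos : 0 < Real.sqrt N :=
  Real.sqrt_pos.mpr (by exact_mod_cast Nat.pos_of_ne_zero (NeZero.ne N))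

lemma sqrtN_mul_self : Real.sqrt N * Real.sqrt N = N :=
  Real.mul_self_sqrt (Nat.cast_nonneg N)

/-- Fourier inversion. -/
lemma inv_formula (u : ZMod N → ℂ) (x : ZMod N) :
    ∑ ω : ZMod N, dft u ω * e (-(ω * x)) = (Real.sqrt N : ℂ) * u x := by
  have hs : (Real.sqrt N : ℂ) ≠ 0 := by
    exact_mod_cast Complex.ofReal_ne_zero.mpr (ne_of_gt sqrtN_pos)
  calc ∑ ω : ZMod N, dft u ω * e (-(ω * x))
      = (Real.sqrt N : ℂ)⁻¹ * ∑ ω : ZMod N, ∑ y : ZMod N, u y * (e (ω * y) * e (-(ω * x))) := by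
        rw [Finset.mul_sum]
        refine Finset.sum_congr rfl fun ω _ => ?_
        rw [dft_eq, mul_assoc, Finset.sum_mul]
        congr 1
        refine Finset.sum_congr rfl fun y _ => ?_
        ring
    _ = (Real.sqrt N : ℂ)⁻¹ * ∑ y : ZMod N, u y * ∑ ω : ZMod N, e ((y - x) * ω) := by
        rw [Finset.sum_comm]
        congr 1
        refine Finset.sum_congr rfl fun y _ => ?_
        rw [Finset.mul_sum]
        refine Finset.sum_congr rfl fun ω _ => ?_
        rw [← e_add]
        congr 1
        ring
    _ = (Real.sqrt N : ℂ)⁻¹ * ∑ y : ZMod N, u y * (if y - x = 0 then (N : ℂ) else 0) := by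
        congr 1
        exact Finset.sum_congr rfl fun y _ => by rw [orth]
    _ = (Real.sqrt N : ℂ)⁻¹ * (u x * N) := by
        congr 1
        rw [Finset.sum_eq_single x]
        · simp
        · intro y _ hy
          rw [if_neg (sub_ne_zero.mpr hy), mul_zero]
        · intro hx
          exact absurd (Finset.mem_univ x) hx
    _ = (Real.sqrt N : ℂ) * u x := by
        have hNs : ((N : ℕ) : ℂ) = (Real.sqrt N : ℂ) * (Real.sqrt N : ℂ) := by
          rw [← Complex.ofReal_mul, sqrtN_mul_self, Complex.ofReal_natCast]
        have hsne : (Real.sqrt N : ℂ) ≠ 0 :=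
          Complex.ofReal_ne_zero.mpr (ne_of_gt sqrtN_pos)
        rw [hNs]
        field_simp

lemma abs_ofReal_sqrt : ‖((Real.sqrt N : ℝ) : ℂ)‖ = Real.sqrt N := by
  rw [Complex.norm_real, Real.norm_of_nonneg (Real.sqrt_nonneg _)]

/-- Sup bound from the Fourier side. -/
lemma abs_le_l1_dft (u : ZMod N → ℂ) (x : ZMod N) :
    ‖u x‖ ≤ (Real.sqrt N)⁻¹ * l1 univ (dft u) := by
  have h := inv_formula u x
  have habs : Real.sqrt N * ‖u x‖
      = ‖∑ ω : ZMod N, dft u ω * e (-(ω * x))‖ := by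
    rw [h, norm_mul, abs_ofReal_sqrt]
  have hle : ‖∑ ω : ZMod N, dft u ω * e (-(ω * x))‖ ≤ l1 univ (dft u) := by
    refine le_trans (norm_sum_le _ _) ?_
    refine le_of_eq (Finset.sum_congr rfl fun ω _ => ?_)
    rw [norm_mul, abs_e, mul_one]
  have hs := sqrtN_pos (N := N)
  have h5 : Real.sqrt N * ‖u x‖ ≤ l1 univ (dft u) := by
    rw [habs]; exact hle
  calc ‖u x‖
      = (Real.sqrt N)⁻¹ * (Real.sqrt N * ‖u x‖) := by
        field_simp
    _ ≤ (Real.sqrt N)⁻¹ * l1 univ (dft u) :=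
        mul_le_mul_of_nonneg_left h5 (by positivity)

/-- Trivial bound on each Fourier coefficient. -/
lemma abs_dft_le (u : ZMod N → ℂ) (ω : ZMod N) :
    ‖dft u ω‖ ≤ (Real.sqrt N)⁻¹ * l1 univ u := by
  rw [dft_eq, norm_mul]
  have h1 : ‖(Real.sqrt N : ℂ)⁻¹‖ = (Real.sqrt N)⁻¹ := by
    rw [norm_inv, abs_ofReal_sqrt]
  rw [h1]
  refine mul_le_mul_of_nonneg_left ?_ (inv_nonneg.mpr (Real.sqrt_nonneg _))
  refine le_trans (norm_sum_le _ _) ?_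
  refine le_of_eq (Finset.sum_congr rfl fun y _ => ?_)
  rw [norm_mul, abs_e, mul_one]

lemma l1_nonneg (A : Finset (ZMod N)) (u : ZMod N → ℂ) : 0 ≤ l1 A u :=
  Finset.sum_nonneg fun x _ => norm_nonneg _

lemma l1_dft_le (A : Finset (ZMod N)) (u : ZMod N → ℂ) :
    l1 A (dft u) ≤ (A.card : ℝ) * ((Real.sqrt N)⁻¹ * l1 univ u) := by
  calc l1 A (dft u) ≤ ∑ _x ∈ A, (Real.sqrt N)⁻¹ * l1 univ u :=
        Finset.sum_le_sum fun ω _ => abs_dft_le u ω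
    _ = (A.card : ℝ) * ((Real.sqrt N)⁻¹ * l1 univ u) := by
        rw [Finset.sum_const, nsmul_eq_mul]

lemma dft_add (p q : ZMod N → ℂ) (ω : ZMod N) :
    dft (fun x => p x + q x) ω = dft p ω + dft q ω := by
  unfold dft
  rw [← mul_add, ← Finset.sum_add_distrib]
  congr 1
  refine Finset.sum_congr rfl fun x _ => ?_
  ring

end Stmt16Aux

set_option maxHeartbeats 1000000 in
open Stmt16Aux in
/-- Noisy random Logan, deterministic core. -/
theorem stmt16 {N : ℕ} [NeZero N] (f g : ZMod N → ℂ) (M S : Finset (ZMod N))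
    (ε δ C_T : ℝ) (hε : 0 ≤ ε) (hδ : 0 ≤ δ) (hCT : 0 < C_T)
    (hconc : l1 Sᶜ (dft f) ≤ ε / N * l1 univ (dft f))
    (hnoise : l1 Mᶜ (f - g) ≤ δ / N * l1 Mᶜ f)
    (hmin : l1 univ (dft g) ≤ l1 univ (dft f))
    (hTal : l1 S (dft fun x => if x ∈ M then (f - g) x else 0) ≤
      Real.sqrt S.card * (Real.sqrt N)⁻¹ *
        (C_T * Real.sqrt (Real.log N * Real.log (Real.log N))) *
        l1 univ (dft fun x => if x ∈ M then (f - g) x else 0))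
    (hS : (S.card : ℝ) <
      N / (16 * C_T ^ 2 * (Real.log N * Real.log (Real.log N)))) :
    (1 / (M.card : ℝ)) * ∑ x ∈ M, ‖f x - g x‖ ≤
      (4 * ε + 2 * δ) * (1 / N) * ∑ x : ZMod N, ‖f x‖ := by
  have hNpos : (0 : ℝ) < N := by exact_mod_cast Nat.pos_of_ne_zero (NeZero.ne N)
  set L : ℝ := Real.log N * Real.log (Real.log N) with hL
  -- the log factor must be positive, else hS is contradictory
  have hLpos : 0 < L := by
    by_contra hc
    push_neg at hc
    have hdiv : (N : ℝ) / (16 * C_T ^ 2 * L) ≤ 0 := by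
      rcases lt_or_eq_of_le hc with h | h
      · have h16 : (0 : ℝ) < 16 * C_T ^ 2 := by positivity
        exact le_of_lt (div_neg_of_pos_of_neg hNpos (by nlinarith [mul_pos h16 (neg_pos.mpr h)]))
      · rw [h, mul_zero, div_zero]
    have := lt_of_lt_of_le hS hdiv
    exact absurd this (not_lt.mpr (Nat.cast_nonneg _))
  set s : ℝ := Real.sqrt N with hsdef
  have hs : 0 < s := sqrtN_pos
  have hss : s * s = (N : ℝ) := sqrtN_mul_self
  set u : ZMod N → ℂ := fun x => if x ∈ M then (f - g) x else 0 with hu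
  set v : ZMod N → ℂ := fun x => if x ∈ M then 0 else (f - g) x with hv
  set F : ℝ := ∑ x : ZMod N, ‖f x‖ with hF
  have hFnn : 0 ≤ F := Finset.sum_nonneg fun x _ => norm_nonneg _
  set A : ℝ := l1 univ (dft u) with hA
  have hAnn : 0 ≤ A := l1_nonneg _ _
  clear_value L s u v F A
  -- Talagrand coefficient is at most 1/4
  have hcoef : Real.sqrt S.card * s⁻¹ * (C_T * Real.sqrt L) ≤ 1 / 4 := by
    set c : ℝ := Real.sqrt S.card * s⁻¹ * (C_T * Real.sqrt L) with hc
    have hcnn : 0 ≤ c := by positivity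
    have hs2 : s ^ 2 = (N : ℝ) := by rw [hsdef]; exact Real.sq_sqrt (Nat.cast_nonneg N)
    have hc2 : c ^ 2 = (S.card : ℝ) * (N : ℝ)⁻¹ * (C_T ^ 2 * L) := by
      have hexp : c ^ 2 = (Real.sqrt S.card) ^ 2 * (s ^ 2)⁻¹ * (C_T ^ 2 * (Real.sqrt L) ^ 2) := by
        rw [hc]; ring
      rw [hexp, Real.sq_sqrt (Nat.cast_nonneg _), Real.sq_sqrt (le_of_lt hLpos), hs2]
    have hD : 0 < 16 * C_T ^ 2 * L := by positivity
    have hSb : (S.card : ℝ) * (16 * C_T ^ 2 * L) < N := (lt_div_iff₀ hD).mp hS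
    have hc216 : c ^ 2 < 1 / 16 := by
      rw [hc2]
      rw [show (S.card : ℝ) * (N : ℝ)⁻¹ * (C_T ^ 2 * L)
          = ((S.card : ℝ) * (16 * C_T ^ 2 * L)) / (16 * N) by field_simp]
      rw [div_lt_div_iff₀ (by positivity) (by norm_num)]
      nlinarith
    nlinarith
  have hsupA : ∀ x ∈ M, ‖f x - g x‖ ≤ s⁻¹ * A := by
    intro x hx
    have h1 := abs_le_l1_dft u x
    rw [← hsdef, ← hA] at h1
    have h2 : u x = f x - g x := by simp [hu, hx]
    rw [h2] at h1
    exact h1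
  -- Pieces of the Fourier-side L¹ norms
  have hsplit : ∀ (w : ZMod N → ℂ), l1 S w + l1 Sᶜ w = l1 univ w := by
    intro w
    exact Finset.sum_add_sum_compl S _
  -- u + v = f - g pointwise, hence on Fourier side
  have hsum : ∀ ω, dft (f - g) ω = dft u ω + dft v ω := by
    intro ω
    rw [← dft_add]
    congr 1
    funext x
    by_cases hx : x ∈ M <;> simp [hu, hv, hx]
  -- triangle inequalities
  have habs_sub : ∀ a b : ℂ, ‖a‖ - ‖b‖ ≤ ‖a - b‖ := by
    intro a b
    simpa using norm_sub_norm_le a b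
  have habs_add : ∀ a b : ℂ, ‖a + b‖ ≤ ‖a‖ + ‖b‖ := by
    intro a b
    simpa using norm_add_le a b
  -- (b) Qu ≤ Qh + Qv
  have hb : l1 Sᶜ (dft u) ≤ l1 Sᶜ (dft (f - g)) + l1 Sᶜ (dft v) := by
    rw [show l1 Sᶜ (dft (f - g)) + l1 Sᶜ (dft v)
        = ∑ ω ∈ Sᶜ, (‖dft (f - g) ω‖ + ‖dft v ω‖) by
      simp only [l1, ← Finset.sum_add_distrib]]
    refine Finset.sum_le_sum fun ω _ => ?_
    have : dft u ω = dft (f - g) ω - dft v ω := by rw [hsum ω]; ring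
    rw [this]
    simpa using norm_sub_le (dft (f - g) ω) (dft v ω)
  -- (d) Ph ≤ Pu + Pv
  have hd : l1 S (dft (f - g)) ≤ l1 S (dft u) + l1 S (dft v) := by
    rw [show l1 S (dft u) + l1 S (dft v)
        = ∑ ω ∈ S, (‖dft u ω‖ + ‖dft v ω‖) by
      simp only [l1, ← Finset.sum_add_distrib]]
    refine Finset.sum_le_sum fun ω _ => ?_
    rw [hsum ω]
    exact habs_add _ _
  -- (c) minimization: Qh ≤ Ph + 2 Qf
  have hc : l1 Sᶜ (dft (f - g)) ≤ l1 S (dft (f - g)) + 2 * l1 Sᶜ (dft f) := by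
    -- f̂ = ĝ + ĥ
    have hfgh : ∀ ω, dft f ω = dft g ω + dft (f - g) ω := by
      intro ω
      rw [← dft_add]
      congr 1
      funext x
      simp
    have h1 : l1 S (dft f) ≤ l1 S (dft g) + l1 S (dft (f - g)) := by
      rw [show l1 S (dft g) + l1 S (dft (f - g))
          = ∑ ω ∈ S, (‖dft g ω‖ + ‖dft (f - g) ω‖) by
        simp only [l1, ← Finset.sum_add_distrib]]
      refine Finset.sum_le_sum fun ω _ => ?_
      rw [hfgh ω]
      exact habs_add _ _
    have h2 : l1 Sᶜ (dft (f - g)) ≤ l1 Sᶜ (dft g) + l1 Sᶜ (dft f) := by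
      rw [show l1 Sᶜ (dft g) + l1 Sᶜ (dft f)
          = ∑ ω ∈ Sᶜ, (‖dft g ω‖ + ‖dft f ω‖) by
        simp only [l1, ← Finset.sum_add_distrib]]
      refine Finset.sum_le_sum fun ω _ => ?_
      have : dft (f - g) ω = dft f ω - dft g ω := by rw [hfgh ω]; ring
      rw [this]
      calc ‖dft f ω - dft g ω‖ ≤ ‖dft f ω‖ + ‖dft g ω‖ := by
            simpa using norm_sub_le (dft f ω) (dft g ω)
        _ = ‖dft g ω‖ + ‖dft f ω‖ := by ring
    have h3 := hsplit (dft g)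
    have h4 := hsplit (dft f)
    linarith
  -- (a) Talagrand: Pu ≤ A/4
  have ha : l1 S (dft u) ≤ (1 / 4) * A := by
    have h1 : l1 S (dft u) ≤ Real.sqrt S.card * s⁻¹ * (C_T * Real.sqrt L) * A := hTal
    calc l1 S (dft u) ≤ Real.sqrt S.card * s⁻¹ * (C_T * Real.sqrt L) * A := h1
      _ ≤ (1 / 4) * A := mul_le_mul_of_nonneg_right hcoef hAnn
  -- (e,v) bound on v side
  have hvnorm : l1 univ v = l1 Mᶜ (f - g) := by
    simp only [l1]
    rw [← Finset.sum_add_sum_compl M fun x => ‖v x‖]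
    have hM0 : ∑ x ∈ M, ‖v x‖ = 0 := by
      refine Finset.sum_eq_zero fun x hx => by simp [hv, hx]
    rw [hM0, zero_add]
    refine Finset.sum_congr rfl fun x hx => ?_
    have hx' : x ∉ M := Finset.mem_compl.mp hx
    simp [hv, hx']
  have hfMc : l1 Mᶜ f ≤ F := by
    rw [hF]
    simp only [l1]
    exact Finset.sum_le_sum_of_subset_of_nonneg (Finset.subset_univ _)
      fun x _ _ => norm_nonneg _
  have hvF : l1 univ v ≤ δ / N * F := by
    rw [hvnorm]
    calc l1 Mᶜ (f - g) ≤ δ / N * l1 Mᶜ f := hnoise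
      _ ≤ δ / N * F := mul_le_mul_of_nonneg_left hfMc (by positivity)
  have hvdft : l1 univ (dft v) ≤ s * (δ / N * F) := by
    have hl := l1_dft_le univ v
    rw [← hsdef] at hl
    calc l1 univ (dft v) ≤ ((univ : Finset (ZMod N)).card : ℝ) * (s⁻¹ * l1 univ v) := hl
      _ = (N : ℝ) * (s⁻¹ * l1 univ v) := by rw [Finset.card_univ, ZMod.card]
      _ = s * l1 univ v := by
          rw [← hss]; field_simp
      _ ≤ s * (δ / N * F) := mul_le_mul_of_nonneg_left hvF (le_of_lt hs)
  -- (f) concentration bound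
  have hfdft : l1 univ (dft f) ≤ s * F := by
    have hl := l1_dft_le univ f
    rw [← hsdef] at hl
    calc l1 univ (dft f) ≤ ((univ : Finset (ZMod N)).card : ℝ) * (s⁻¹ * l1 univ f) := hl
      _ = (N : ℝ) * (s⁻¹ * l1 univ f) := by rw [Finset.card_univ, ZMod.card]
      _ = s * l1 univ f := by rw [← hss]; field_simp
      _ = s * F := by rw [hF]; rfl
  have hQf : l1 Sᶜ (dft f) ≤ ε / N * (s * F) := by
    calc l1 Sᶜ (dft f) ≤ ε / N * l1 univ (dft f) := hconc
      _ ≤ ε / N * (s * F) := mul_le_mul_of_nonneg_left hfdft (by positivity)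
  -- assemble: A ≤ s⁻¹ * (4ε + 2δ) * F
  have hsplitu := hsplit (dft u)
  have hsplitv := hsplit (dft v)
  rw [← hA] at hsplitu
  have hPv0 : 0 ≤ l1 S (dft v) := l1_nonneg _ _
  have hQv0 : 0 ≤ l1 Sᶜ (dft v) := l1_nonneg _ _
  set Pu := l1 S (dft u) with hgPu
  set Qu := l1 Sᶜ (dft u) with hgQu
  set Pv := l1 S (dft v) with hgPv
  set Qv := l1 Sᶜ (dft v) with hgQv
  set Ph := l1 S (dft (f - g)) with hgPh
  set Qh := l1 Sᶜ (dft (f - g)) with hgQh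
  set Qf2 := l1 Sᶜ (dft f) with hgQf
  set Vv := l1 univ (dft v) with hgVv
  clear_value Pu Qu Pv Qv Ph Qh Qf2 Vv
  clear hTal hconc hnoise hmin hsum hvnorm hvF hfdft hfMc hsplit
  have hkey : A ≤ s⁻¹ * ((4 * ε + 2 * δ) * F) := by
    have hchain : Qu ≤ (1 / 4) * A + (Pv + Qv) + 2 * (ε / N * (s * F)) := by
      linarith
    have hAbound : A ≤ (1 / 2) * A + s * (δ / N * F) + 2 * (ε / N * (s * F)) := by
      have h1 : Pv + Qv ≤ s * (δ / N * F) := by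
        rw [hsplitv]; exact hvdft
      linarith
    have hsne : s ≠ 0 := ne_of_gt hs
    have hsN : s / N = s⁻¹ := by
      rw [← hss, div_mul_eq_div_div, div_self hsne, one_div]
    have h2 : s * (δ / N * F) = s⁻¹ * (δ * F) := by
      rw [show s * (δ / N * F) = (s / N) * (δ * F) by ring, hsN]
    have h3 : 2 * (ε / N * (s * F)) = s⁻¹ * (2 * ε * F) := by
      rw [show 2 * (ε / N * (s * F)) = (s / N) * (2 * ε * F) by ring, hsN]
    rw [h2, h3] at hAbound
    have h4 : (1 / 2) * A ≤ s⁻¹ * (δ * F) + s⁻¹ * (2 * ε * F) := by linarith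
    have hfin : A ≤ 2 * (s⁻¹ * (δ * F) + s⁻¹ * (2 * ε * F)) := by linarith
    calc A ≤ 2 * (s⁻¹ * (δ * F) + s⁻¹ * (2 * ε * F)) := hfin
      _ = s⁻¹ * ((4 * ε + 2 * δ) * F) := by ring
  -- conclude
  have hRHS : s⁻¹ * A ≤ (4 * ε + 2 * δ) * (1 / N) * F := by
    calc s⁻¹ * A ≤ s⁻¹ * (s⁻¹ * ((4 * ε + 2 * δ) * F)) :=
          mul_le_mul_of_nonneg_left hkey (by positivity)
      _ = (s⁻¹ * s⁻¹) * ((4 * ε + 2 * δ) * F) := by ring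
      _ = (4 * ε + 2 * δ) * (1 / N) * F := by
          rw [show s⁻¹ * s⁻¹ = (s * s)⁻¹ by rw [mul_inv]]
          rw [hss]
          ring
  by_cases hM : M.card = 0
  · have hMempty : M = ∅ := Finset.card_eq_zero.mp hM
    rw [hMempty]
    simp only [Finset.sum_empty, mul_zero]
    exact mul_nonneg (mul_nonneg (by linarith) (by positivity)) hFnn
  · have hMpos : (0 : ℝ) < M.card := by exact_mod_cast Nat.pos_of_ne_zero hM
    have hsum2 : ∑ x ∈ M, ‖f x - g x‖ ≤ (M.card : ℝ) * (s⁻¹ * A) := by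
      calc ∑ x ∈ M, ‖f x - g x‖ ≤ ∑ _x ∈ M, s⁻¹ * A :=
            Finset.sum_le_sum hsupA
        _ = (M.card : ℝ) * (s⁻¹ * A) := by rw [Finset.sum_const, nsmul_eq_mul]
    calc (1 / (M.card : ℝ)) * ∑ x ∈ M, ‖f x - g x‖
        ≤ (1 / (M.card : ℝ)) * ((M.card : ℝ) * (s⁻¹ * A)) :=
          mul_le_mul_of_nonneg_left hsum2 (by positivity)
      _ = s⁻¹ * A := by
          rw [one_div, inv_mul_cancel_left₀ (ne_of_gt hMpos)]
      _ ≤ (4 * ε + 2 * δ) * (1 / N) * F := hRHS
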